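/- For 0 < α ≤ 1/2, the length N of a sequence can be recovered from its FOFE code: if FOFE(S) = FOFE(S') for sequences S of length N and S' of length M, then N = M. -/
import Mathlib


noncomputable def oneHot {V : Type*} [DecidableEq V] (w v : V) : ℝ := if v = w then 1 else 0

noncomputable def fofe {V : Type*} [DecidableEq V] (α : ℝ) (S : List V) : V → ℝ :=
  S.foldl (fun z w v => α * z v + oneHot w v) (fun _ => 0)

lemma fofe_concat {V : Type*} [DecidableEq V] (α : ℝ) (S : List V) (w : V) :
    fofe α (S ++ [w]) = fun v => α * fofe α S v + oneHot w v := by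
  simp [fofe, List.foldl_append]

lemma fofe_nonneg {V : Type*} [DecidableEq V] {α : ℝ} (hα0 : 0 ≤ α) (S : List V) :
    ∀ v, 0 ≤ fofe α S v := by
  induction S using List.reverseRecOn with
  | nil => intro v; simp [fofe]
  | append_singleton S w ih =>
      intro v
      rw [fofe_concat]
      have := ih v
      have h2 : 0 ≤ α * fofe α S v := mul_nonneg hα0 this
      simp only [oneHot]
      split <;> linarith

lemma fofe_lt_two {V : Type*} [DecidableEq V] {α : ℝ} (hα0 : 0 < α) (hα : α ≤ 1/2)
    (S : List V) : ∀ v, fofe α S v < 2 := by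
  induction S using List.reverseRecOn with
  | nil => intro v; simp [fofe]
  | append_singleton S w ih =>
      intro v
      rw [fofe_concat]
      have h1 := ih v
      have h0 := fofe_nonneg hα0.le S v
      simp only [oneHot]
      split <;> nlinarith

lemma fofe_last_ge_one {V : Type*} [DecidableEq V] {α : ℝ} (hα0 : 0 < α)
    (S : List V) (w : V) : 1 ≤ fofe α (S ++ [w]) w := by
  rw [fofe_concat]
  have := mul_nonneg hα0.le (fofe_nonneg hα0.le S w)
  simp [oneHot]
  linarith

theorem fofe_length_recoverable {V : Type*} [Countable V] [DecidableEq V] {α : ℝ}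
    (hα0 : 0 < α) (hα : α ≤ 1/2) (S S' : List V)
    (h : fofe α S = fofe α S') : S.length = S'.length := by
  induction S using List.reverseRecOn generalizing S' with
  | nil =>
      rcases S'.eq_nil_or_concat' with rfl | ⟨T, w, rfl⟩
      · rfl
      · exfalso
        have h1 := fofe_last_ge_one hα0 T w
        have h2 : fofe α ([] : List V) w = 0 := by simp [fofe]
        rw [← h, h2] at h1
        linarith
  | append_singleton S w ih =>
      rcases S'.eq_nil_or_concat' with rfl | ⟨T, w', rfl⟩
      · exfalso
        have h1 := fofe_last_ge_one hα0 S w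
        have h2 : fofe α ([] : List V) w = 0 := by simp [fofe]
        rw [h, h2] at h1
        linarith
      · have hw : w = w' := by
          by_contra hne
          have h1 := fofe_last_ge_one hα0 T w'
          have h2 : fofe α (S ++ [w]) w' = α * fofe α S w' := by
            rw [fofe_concat]
            have hne' : ¬ w' = w := fun hc => hne hc.symm
            simp only [oneHot, if_neg hne']
            ring
          have h3 : α * fofe α S w' < 1 := by
            have := fofe_lt_two hα0 hα S w'
            have h0 := fofe_nonneg hα0.le S w'
            nlinarith
          have h4 := congrFun h w'
          rw [h2] at h4
          linarith [h4 ▸ h3]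
        subst hw
        have key : fofe α S = fofe α T := by
          funext v
          have hv := congrFun h v
          rw [fofe_concat, fofe_concat] at hv
          simp only at hv
          have h2 : α * fofe α S v = α * fofe α T v := by linarith
          exact mul_left_cancel₀ (ne_of_gt hα0) h2
        simp [ih T key]
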